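/- Let E be a real Hilbert space and F : E → ℝ differentiable with L-Lipschitz gradient (L > 0), μ-strongly convex with constant μ > 0 (i.e., F(y) ≥ F(x) + ⟨∇F(x), y − x⟩ + (μ/2)‖y − x‖² for all x, y), with minimizer θ* and minimum value F* = F(θ*). Fix 0 < η ≤ min(1/L, 1/(2μ)). Let θ^0, θ^1, … : Ω → E and g^0, g^1, … : Ω → E be random vectors with θ^{t+1} = θ^t − η • g^t for all t, conditional expectation of g^t given σ(θ^0,…,θ^t) equal to ∇F(θ^t) almost surely, conditional variance at most σ² almost surely (all stated integrability holding), and θ^0 deterministic. Then for every t, E[‖θ^t − θ*‖²] ≤ (L/μ)·(1 − μη)^t·‖θ^0 − θ*‖² + L·η·σ²/μ². -/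

import Mathlib

open MeasureTheory RealInnerProductSpace

set_option maxHeartbeats 1000000

section Aux

theorem pmix_line_deriv {E : Type*} [NormedAddCommGroup E] [InnerProductSpace ℝ E] [CompleteSpace E]
    (F : E → ℝ) (hF : Differentiable ℝ F) (x v : E) (s : ℝ) :
    HasDerivAt (fun s : ℝ => F (x + s • v)) ⟪gradient F (x + s • v), v⟫ s := by
  have h1 : HasFDerivAt F (InnerProductSpace.toDual ℝ E (gradient F (x + s • v))) (x + s • v) :=
    (hF _).hasGradientAt.hasFDerivAt
  have h2 : HasDerivAt (fun s : ℝ => x + s • v) v s := by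
    simpa using ((hasDerivAt_id s).smul_const v).const_add x
  exact (h1.comp_hasDerivAt s h2).congr_deriv (by simp [InnerProductSpace.toDual_apply_apply])

theorem pmix_descent {E : Type*} [NormedAddCommGroup E] [InnerProductSpace ℝ E] [CompleteSpace E]
    (F : E → ℝ) (hF : Differentiable ℝ F) (L : ℝ) (hL : 0 < L)
    (hlip : ∀ x y : E, ‖gradient F x - gradient F y‖ ≤ L * ‖x - y‖) (x y : E) :
    F y ≤ F x + ⟪gradient F x, y - x⟫ + L / 2 * ‖y - x‖ ^ 2 := by
  set v := y - x with hv
  set φ : ℝ → ℝ := fun s => F (x + s • v) - s * ⟪gradient F x, v⟫ - L * ‖v‖ ^ 2 * s ^ 2 / 2 with hφ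
  have hder : ∀ s : ℝ, HasDerivAt φ
      (⟪gradient F (x + s • v), v⟫ - ⟪gradient F x, v⟫ - L * ‖v‖ ^ 2 * s) s := by
    intro s
    have h1 := pmix_line_deriv F hF x v s
    have h2 : HasDerivAt (fun s : ℝ => s * ⟪gradient F x, v⟫) ⟪gradient F x, v⟫ s := by
      simpa using (hasDerivAt_id s).mul_const ⟪gradient F x, v⟫
    have h3 : HasDerivAt (fun s : ℝ => L * ‖v‖ ^ 2 * s ^ 2 / 2) (L * ‖v‖ ^ 2 * s) s := by
      have := ((hasDerivAt_pow 2 s).const_mul (L * ‖v‖ ^ 2)).div_const 2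
      exact this.congr_deriv (by push_cast; ring)
    exact (h1.sub h2).sub h3
  have hmono : AntitoneOn φ (Set.Icc 0 1) := by
    apply antitoneOn_of_deriv_nonpos (convex_Icc 0 1)
    · exact fun s _ => ((hder s).differentiableAt).continuousAt.continuousWithinAt
    · exact fun s _ => ((hder s).differentiableAt).differentiableWithinAt
    · intro s hs
      rw [interior_Icc] at hs
      rw [(hder s).deriv]
      have hb : ⟪gradient F (x + s • v) - gradient F x, v⟫ ≤ L * s * ‖v‖ ^ 2 := by
        calc ⟪gradient F (x + s • v) - gradient F x, v⟫
            ≤ ‖gradient F (x + s • v) - gradient F x‖ * ‖v‖ := real_inner_le_norm _ _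
          _ ≤ (L * ‖(x + s • v) - x‖) * ‖v‖ := by
              have := hlip (x + s • v) x
              nlinarith [norm_nonneg v, norm_nonneg (gradient F (x + s • v) - gradient F x)]
          _ = L * s * ‖v‖ ^ 2 := by
              simp [norm_smul, abs_of_pos hs.1]; ring
      rw [inner_sub_left] at hb
      nlinarith
  have := hmono (Set.mem_Icc.mpr ⟨le_rfl, zero_le_one⟩)
    (Set.mem_Icc.mpr ⟨zero_le_one, le_rfl⟩) zero_le_one
  simp only [hφ, one_smul, zero_smul, add_zero, zero_mul, one_pow, mul_one] at this
  have hxy : x + v = y := by rw [hv]; abel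
  rw [hxy] at this
  nlinarith [this]

variable {E : Type*} [NormedAddCommGroup E] [InnerProductSpace ℝ E] [CompleteSpace E]

theorem pmix_grad_sq_le (F : E → ℝ) (hF : Differentiable ℝ F) (L : ℝ) (hL : 0 < L)
    (hlip : ∀ x y : E, ‖gradient F x - gradient F y‖ ≤ L * ‖x - y‖)
    (θstar : E) (hmin : ∀ x, F θstar ≤ F x) (x : E) :
    ‖gradient F x‖ ^ 2 ≤ 2 * L * (F x - F θstar) := by
  have h := pmix_descent F hF L hL hlip x (x - (1 / L) • gradient F x)
  have h2 := hmin (x - (1 / L) • gradient F x)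
  have e1 : x - (1 / L) • gradient F x - x = -((1/L) • gradient F x) := by abel
  rw [e1] at h
  rw [inner_neg_right, real_inner_smul_right, real_inner_self_eq_norm_sq] at h
  rw [norm_neg, norm_smul] at h
  have hLne : L ≠ 0 := ne_of_gt hL
  have : ‖(1:ℝ)/L‖ = 1/L := abs_of_pos (by positivity)
  rw [this] at h
  have hh : F θstar ≤ F x - (1/(2*L)) * ‖gradient F x‖^2 := by
    refine h2.trans (h.trans_eq ?_)
    field_simp
    ring
  have h4 : (2*L) * (1/(2*L) * ‖gradient F x‖^2) ≤ (2*L) * (F x - F θstar) :=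
    mul_le_mul_of_nonneg_left (by linarith) (by positivity)
  have h5 : (2*L) * (1/(2*L) * ‖gradient F x‖^2) = ‖gradient F x‖^2 := by field_simp
  linarith

theorem pmix_strong_facts (F : E → ℝ) (μ : ℝ)
    (hsc : ∀ x y : E, F x + ⟪gradient F x, y - x⟫ + (μ / 2) * ‖y - x‖ ^ 2 ≤ F y)
    (θstar : E) (x : E) :
    F x - F θstar + μ / 2 * ‖x - θstar‖ ^ 2 ≤ ⟪gradient F x, x - θstar⟫ := by
  have h := hsc x θstar
  have : ⟪gradient F x, θstar - x⟫ = -⟪gradient F x, x - θstar⟫ := by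
    rw [← inner_neg_right]; congr 1; abel
  rw [this] at h
  have hn : ‖θstar - x‖ = ‖x - θstar‖ := norm_sub_rev _ _
  rw [hn] at h
  linarith

theorem pmix_pointwise_contract (F : E → ℝ) (hF : Differentiable ℝ F) (L : ℝ) (hL : 0 < L)
    (hlip : ∀ x y : E, ‖gradient F x - gradient F y‖ ≤ L * ‖x - y‖)
    (μ : ℝ) (hμ : 0 < μ)
    (hsc : ∀ x y : E, F x + ⟪gradient F x, y - x⟫ + (μ / 2) * ‖y - x‖ ^ 2 ≤ F y)
    (θstar : E) (hmin : ∀ x, F θstar ≤ F x)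
    (η : ℝ) (hη0 : 0 < η) (hηL : η ≤ 1 / L) (x : E) :
    ‖x - θstar - η • gradient F x‖ ^ 2 ≤ (1 - μ * η) * ‖x - θstar‖ ^ 2 := by
  have hg2 := pmix_grad_sq_le F hF L hL hlip θstar hmin x
  have hsf := pmix_strong_facts F μ hsc θstar x
  have hde : F θstar ≤ F x := hmin x
  have hexp : ‖x - θstar - η • gradient F x‖ ^ 2 =
      ‖x - θstar‖ ^ 2 - 2 * (η * ⟪gradient F x, x - θstar⟫) + η^2 * ‖gradient F x‖ ^ 2 := by
    rw [@norm_sub_sq_real, real_inner_smul_right, norm_smul]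
    rw [real_inner_comm]
    have : ‖η‖ = η := abs_of_pos hη0
    rw [this]
    ring
  rw [hexp]
  have hηL' : η * L ≤ 1 := by
    rw [← le_div_iff₀ hL]; exact hηL
  have p1 : 2*η*(F x - F θstar + μ/2*‖x - θstar‖^2) ≤ 2*η*⟪gradient F x, x - θstar⟫ :=
    mul_le_mul_of_nonneg_left hsf (by positivity)
  have p2 : η^2 * ‖gradient F x‖^2 ≤ η^2 * (2*L*(F x - F θstar)) :=
    mul_le_mul_of_nonneg_left hg2 (sq_nonneg η)
  have p3 : η^2 * (2*L*(F x - F θstar)) ≤ 2*η*(F x - F θstar) := by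
    nlinarith [mul_le_mul_of_nonneg_right hηL' (mul_nonneg (le_of_lt hη0) (sub_nonneg.mpr hde))]
  nlinarith [p1, p2, p3]

theorem pmix_mu_le_L [Nontrivial E] (F : E → ℝ) (L : ℝ)
    (hlip : ∀ x y : E, ‖gradient F x - gradient F y‖ ≤ L * ‖x - y‖)
    (μ : ℝ)
    (hsc : ∀ x y : E, F x + ⟪gradient F x, y - x⟫ + (μ / 2) * ‖y - x‖ ^ 2 ≤ F y) :
    μ ≤ L := by
  obtain ⟨v, hv⟩ := exists_ne (0 : E)
  have h1 := hsc 0 v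
  have h2 := hsc v 0
  have e1 : ⟪gradient F v, 0 - v⟫ = -⟪gradient F v, v - 0⟫ := by
    rw [← inner_neg_right]; congr 1; abel
  rw [e1] at h2
  have hn : ‖(0:E) - v‖ = ‖v - 0‖ := norm_sub_rev _ _
  rw [hn] at h2
  have hsum : μ * ‖v - 0‖^2 ≤ ⟪gradient F v - gradient F 0, v - 0⟫ := by
    rw [inner_sub_left]; linarith
  have hcs : ⟪gradient F v - gradient F 0, v - 0⟫ ≤ L * ‖v - 0‖^2 := by
    calc ⟪gradient F v - gradient F 0, v - 0⟫ ≤ ‖gradient F v - gradient F 0‖ * ‖v - 0‖ :=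
        real_inner_le_norm _ _
      _ ≤ L * ‖v - 0‖ * ‖v - 0‖ := by
          have := hlip v 0
          nlinarith [norm_nonneg (v - (0:E)), norm_nonneg (gradient F v - gradient F 0)]
      _ = L * ‖v - 0‖^2 := by ring
  have hv0 : (0:ℝ) < ‖v - 0‖^2 := by
    have h : (0:ℝ) < ‖v - 0‖ := by simpa [sub_zero] using norm_pos_iff.mpr hv
    positivity
  nlinarith

theorem pmix_condExpL2_toLp_ae_eq_condexp {α : Type*} {m m0 : MeasurableSpace α}
    {ν : Measure α} (hm : m ≤ m0) [IsFiniteMeasure ν] {f : α → E}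
    (hf : MemLp f 2 ν) :
    (condExpL2 E ℝ hm (hf.toLp f) : α → E) =ᵐ[ν] ν[f | m] := by
  haveI : SigmaFinite (ν.trim hm) := sigmaFiniteTrim_mono _ le_rfl
  refine ae_eq_condExp_of_forall_setIntegral_eq hm (hf.integrable one_le_two)
    (fun s hs hνs => integrableOn_condExpL2_of_measure_ne_top hm hνs.ne _)
    (fun s hs hνs => ?_) ?_
  · rw [integral_condExpL2_eq hm (hf.toLp f) hs hνs.ne]
    exact setIntegral_congr_ae (hm s hs)
      ((MemLp.coeFn_toLp hf).mono fun x hx _ => hx)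
  · exact lpMeas.aestronglyMeasurable _

theorem pmix_integral_inner_eq_zero {α : Type*} {m m0 : MeasurableSpace α}
    {ν : Measure α} (hm : m ≤ m0) [IsProbabilityMeasure ν] {X e : α → E}
    (hX2 : MemLp X 2 ν) (hXm : AEStronglyMeasurable[m] X ν)
    (he2 : MemLp e 2 ν) (hce : ν[e | m] =ᵐ[ν] 0) :
    ∫ ω, ⟪X ω, e ω⟫ ∂ν = 0 := by
  set X' := hX2.toLp X with hX'
  set e' := he2.toLp e with he'
  have hXc := hX2.coeFn_toLp
  have hec := he2.coeFn_toLp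
  have h1 : ∫ ω, ⟪X ω, e ω⟫ ∂ν = ∫ ω, ⟪e' ω, X' ω⟫ ∂ν := by
    refine integral_congr_ae ?_
    filter_upwards [hXc, hec] with ω h1 h2
    rw [h1, h2, real_inner_comm]
  have h2 : inner ℝ e' X' = ∫ ω, ⟪e' ω, X' ω⟫ ∂ν := L2.inner_def e' X'
  have hXm' : AEStronglyMeasurable[m] (X' : α → E) ν := hXm.congr hXc.symm
  have h3 : (inner ℝ ((condExpL2 E ℝ hm e' : α →₂[ν] E)) X' : ℝ) = inner ℝ e' X' :=
    inner_condExpL2_eq_inner_fun hm e' X' hXm'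
  have h4 : (condExpL2 E ℝ hm e' : α → E) =ᵐ[ν] 0 :=
    (pmix_condExpL2_toLp_ae_eq_condexp hm he2).trans hce
  have h5 : (inner ℝ ((condExpL2 E ℝ hm e' : α →₂[ν] E)) X' : ℝ) = 0 := by
    rw [L2.inner_def]
    rw [integral_congr_ae (g := fun _ => (0:ℝ)) ?_, integral_zero]
    filter_upwards [h4] with ω h
    rw [h]
    simp
  rw [h1, ← h2, ← h3, h5]

theorem pmix_aesm'_of_measurable {α : Type*} [MeasurableSpace E] [BorelSpace E]
    {m m0 : MeasurableSpace α} {ν : @Measure α m0} {f : α → E}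
    (hfm : Measurable[m] f) (hfa : AEStronglyMeasurable f ν) :
    AEStronglyMeasurable[m] f ν := by
  obtain ⟨g, hg, hfg⟩ := hfa
  set C := closure (Set.range g) with hC
  have hCsep : TopologicalSpace.IsSeparable C := hg.isSeparable_range.closure
  have hCclosed : IsClosed C := isClosed_closure
  set A := f ⁻¹' C with hA
  have hAm : MeasurableSet[m] A := hfm hCclosed.measurableSet
  classical
  set f' : α → E := fun ω => if ω ∈ A then f ω else 0 with hf'
  refine ⟨f', ?_, ?_⟩
  · rw [stronglyMeasurable_iff_measurable_separable]
    constructor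
    · exact Measurable.ite hAm hfm measurable_const
    · refine (hCsep.union (Set.finite_singleton (0:E)).isSeparable).mono ?_
      rintro x ⟨ω, rfl⟩
      by_cases h : ω ∈ A
      · left
        have : f' ω = f ω := if_pos h
        rw [this]; exact h
      · right; simp [f', h]
  · filter_upwards [hfg] with ω h
    have : ω ∈ A := by
      rw [hA, Set.mem_preimage, h]
      exact subset_closure ⟨ω, rfl⟩
    simp [f', this]

end Aux

/-- Strongly convex iterate convergence for pMixFed viewed as SGD with effective
step size `0 < η ≤ min(1/L, 1/(2μ))`: for a `μ`-strongly convex `F` with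
`L`-Lipschitz gradient, minimizer `θ*`, conditionally unbiased stochastic
gradients with conditional variance at most `σ²`, and deterministic `θ^0`,
`E[‖θ^t - θ*‖²] ≤ (L/μ)(1 - μη)^t ‖θ^0 - θ*‖² + L η σ² / μ²` for all `t`. -/
theorem strongly_convex_iterate_bound
    {E : Type*} [NormedAddCommGroup E] [InnerProductSpace ℝ E] [CompleteSpace E]
    [MeasurableSpace E] [BorelSpace E]
    {Ωs : Type*} [MeasureSpace Ωs]
    (hprob : IsProbabilityMeasure (volume : Measure Ωs))
    (F : E → ℝ) (hF : Differentiable ℝ F)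
    (L : ℝ) (hL : 0 < L)
    (hlip : ∀ x y : E, ‖gradient F x - gradient F y‖ ≤ L * ‖x - y‖)
    (μ : ℝ) (hμ : 0 < μ)
    (hsc : ∀ x y : E,
      F x + ⟪gradient F x, y - x⟫ + (μ / 2) * ‖y - x‖ ^ 2 ≤ F y)
    (θstar : E) (hmin : ∀ x, F θstar ≤ F x)
    (η : ℝ) (hη0 : 0 < η) (hηmin : η ≤ min (1 / L) (1 / (2 * μ)))
    (θ g : ℕ → Ωs → E) (σ : ℝ)
    (θ0 : E) (hθ0 : ∀ ω, θ 0 ω = θ0)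
    (m : ℕ → MeasurableSpace Ωs)
    (hm : ∀ t, m t = ⨆ s ∈ Finset.range (t + 1), MeasurableSpace.comap (θ s) inferInstance)
    (hupd : ∀ t, ∀ ω, θ (t + 1) ω = θ t ω - η • g t ω)
    (hg_int : ∀ t, Integrable (g t))
    (hgsq_int : ∀ t, Integrable (fun ω => ‖g t ω - gradient F (θ t ω)‖ ^ 2))
    (hF_int : ∀ t, Integrable (fun ω => F (θ t ω)))
    (hdistsq_int : ∀ t, Integrable (fun ω => ‖θ t ω - θstar‖ ^ 2))
    (hcond_mean : ∀ t,
      (volume[g t | m t]) =ᵐ[volume] fun ω => gradient F (θ t ω))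
    (hcond_var : ∀ t,
      ∀ᵐ ω ∂(volume : Measure Ωs),
        (volume[fun ω' => ‖g t ω' - gradient F (θ t ω')‖ ^ 2 | m t]) ω ≤ σ ^ 2) :
    ∀ t, ∫ ω, ‖θ t ω - θstar‖ ^ 2
      ≤ (L / μ) * (1 - μ * η) ^ t * ‖θ0 - θstar‖ ^ 2 + L * η * σ ^ 2 / μ ^ 2 := by
  classical
  haveI := hprob
  have hηL : η ≤ 1 / L := hηmin.trans (min_le_left _ _)
  have hημ : η ≤ 1 / (2 * μ) := hηmin.trans (min_le_right _ _)
  have hμη : μ * η ≤ 1 / 2 := by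
    rw [le_div_iff₀ (by positivity : (0:ℝ) < 2 * μ)] at hημ
    nlinarith
  have h1mη : (0:ℝ) ≤ 1 - μ * η := by linarith
  have hRHS : ∀ n : ℕ, 0 ≤ (L / μ) * (1 - μ * η) ^ n * ‖θ0 - θstar‖ ^ 2
      + L * η * σ ^ 2 / μ ^ 2 := by
    intro n
    have h1 : (0:ℝ) ≤ (1 - μ * η) ^ n := pow_nonneg h1mη n
    have h2 : (0:ℝ) ≤ L * η * σ ^ 2 / μ ^ 2 := by positivity
    have h3 : (0:ℝ) ≤ (L / μ) * (1 - μ * η) ^ n * ‖θ0 - θstar‖ ^ 2 := by positivity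
    linarith
  rcases subsingleton_or_nontrivial E with hE | hE
  · intro t
    have hz : ∀ ω, θ t ω - θstar = 0 := fun ω => Subsingleton.elim _ _
    have : (fun ω => ‖θ t ω - θstar‖ ^ 2) = fun _ => (0:ℝ) := by
      funext ω; rw [hz ω]; simp
    rw [this, integral_zero]
    exact hRHS t
  have hμL : μ ≤ L := pmix_mu_le_L F L hlip μ hsc
  have hLμ1 : (1:ℝ) ≤ L / μ := (one_le_div hμ).mpr hμL
  -- gradient at the minimizer is zero
  have hg0 : gradient F θstar = 0 := by
    have h : IsLocalMin F θstar := Filter.Eventually.of_forall hmin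
    have := h.fderiv_eq_zero
    simp [gradient, this]
  -- gradient is continuous
  have hgradc : Continuous (gradient F) := by
    have : LipschitzWith L.toNNReal (gradient F) := by
      apply LipschitzWith.of_dist_le_mul
      intro x y
      rw [dist_eq_norm, dist_eq_norm, Real.coe_toNNReal L hL.le]
      exact hlip x y
    exact this.continuous
  -- almost-everywhere strong measurability of the iterates
  have hθ_aesm : ∀ t, AEStronglyMeasurable (θ t) volume := by
    intro t
    induction t with
    | zero =>
      have : θ 0 = fun _ => θ0 := funext hθ0
      rw [this]; exact aestronglyMeasurable_const
    | succ t ih =>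
      have : θ (t+1) = fun ω => θ t ω - η • g t ω := funext (hupd t)
      rw [this]
      exact ih.sub ((hg_int t).aestronglyMeasurable.const_smul η)
  -- measurability of θ t with respect to m t
  have hθ_meas : ∀ t, Measurable[m t] (θ t) := by
    intro t
    have hle : MeasurableSpace.comap (θ t) inferInstance ≤ m t := by
      rw [hm t]
      exact le_iSup₂ (f := fun s (_ : s ∈ Finset.range (t+1)) =>
        MeasurableSpace.comap (θ s) inferInstance) t (Finset.self_mem_range_succ t)
    exact measurable_iff_comap_le.mpr hle
  -- monotonicity of the filtration
  have hmono : ∀ t, m t ≤ m (t + 1) := by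
    intro t
    rw [hm t, hm (t+1)]
    refine iSup₂_le fun s hs => le_iSup₂ (f := fun s (_ : s ∈ Finset.range (t+2)) =>
      MeasurableSpace.comap (θ s) inferInstance) s ?_
    exact Finset.range_subset_range.mpr (Nat.le_succ _) hs
  -- pointwise: gradient = 0 implies at minimizer
  have hgradzero : ∀ u : E, gradient F u = 0 → u = θstar := by
    intro u hu
    have h1 := hsc u θstar
    rw [hu, inner_zero_left] at h1
    have h2 := hmin u
    have h3 : ‖θstar - u‖ ^ 2 ≤ 0 := by nlinarith
    have h4 : θstar - u = 0 := by
      have h5 := norm_nonneg (θstar - u)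
      have : ‖θstar - u‖ = 0 := by nlinarith
      exact norm_eq_zero.mp this
    have := sub_eq_zero.mp h4
    exact this.symm
  -- degenerate case: if m n is not a sub-σ-algebra, the iterate sits at the minimizer a.e.
  have hdeg : ∀ n, ¬ (m n ≤ (inferInstance : MeasurableSpace Ωs)) →
      ∫ ω, ‖θ n ω - θstar‖ ^ 2 = 0 := by
    intro n hn
    have h0 : (volume : Measure Ωs)[g n | m n] = 0 := condExp_of_not_le hn
    have hgr : ∀ᵐ ω ∂(volume : Measure Ωs), gradient F (θ n ω) = 0 := by
      have hcm := hcond_mean n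
      rw [h0] at hcm
      filter_upwards [hcm] with ω h
      simpa using h.symm
    have hθs : ∀ᵐ ω ∂(volume : Measure Ωs), θ n ω = θstar := by
      filter_upwards [hgr] with ω h
      exact hgradzero _ h
    have : (fun ω => ‖θ n ω - θstar‖ ^ 2) =ᵐ[volume] fun _ => (0:ℝ) := by
      filter_upwards [hθs] with ω h
      rw [h]; simp
    rw [integral_congr_ae this, integral_zero]
  -- one-step recursion when m t is a genuine sub-σ-algebra
  have hstep : ∀ t, m t ≤ (inferInstance : MeasurableSpace Ωs) →
      ∫ ω, ‖θ (t+1) ω - θstar‖ ^ 2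
        ≤ (1 - μ * η) * (∫ ω, ‖θ t ω - θstar‖ ^ 2) + η ^ 2 * σ ^ 2 := by
    intro t hm0le
    haveI : SigmaFinite ((volume : Measure Ωs).trim hm0le) := sigmaFiniteTrim_mono _ le_rfl
    set d : Ωs → E := fun ω => θ t ω - θstar with hd
    set G : Ωs → E := fun ω => gradient F (θ t ω) with hG
    set e : Ωs → E := fun ω => g t ω - G ω with he
    set X : Ωs → E := fun ω => d ω - η • G ω with hX
    have hd_aesm : AEStronglyMeasurable d volume :=
      (hθ_aesm t).sub aestronglyMeasurable_const
    have hd2 : MemLp d 2 volume :=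
      (memLp_two_iff_integrable_sq_norm hd_aesm).mpr (hdistsq_int t)
    have hG_aesm : AEStronglyMeasurable G volume :=
      hgradc.comp_aestronglyMeasurable (hθ_aesm t)
    have hGbound : ∀ ω, ‖G ω‖ ≤ L * ‖d ω‖ := by
      intro ω
      have := hlip (θ t ω) θstar
      rw [hg0, sub_zero] at this
      exact this
    have hGsq_int : Integrable (fun ω => ‖G ω‖ ^ 2) volume := by
      refine Integrable.mono' ((hdistsq_int t).const_mul (L^2)) (hG_aesm.norm.pow 2) ?_
      refine Filter.Eventually.of_forall fun ω => ?_
      have h1 := hGbound ω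
      have h2 := norm_nonneg (G ω)
      have h3 := norm_nonneg (d ω)
      rw [Real.norm_eq_abs, abs_pow, abs_norm]
      nlinarith
    have hG2 : MemLp G 2 volume :=
      (memLp_two_iff_integrable_sq_norm hG_aesm).mpr hGsq_int
    have he_aesm : AEStronglyMeasurable e volume :=
      (hg_int t).aestronglyMeasurable.sub hG_aesm
    have he2 : MemLp e 2 volume :=
      (memLp_two_iff_integrable_sq_norm he_aesm).mpr (hgsq_int t)
    have hX_aesm : AEStronglyMeasurable X volume := hd_aesm.sub (hG_aesm.const_smul η)
    have hX2 : MemLp X 2 volume := hd2.sub (hG2.const_smul η)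
    have hXsq_int : Integrable (fun ω => ‖X ω‖ ^ 2) volume :=
      (memLp_two_iff_integrable_sq_norm hX_aesm).mp hX2
    -- X is m t-measurable (a.e. strongly)
    have hθ_aesm' : AEStronglyMeasurable[(m t)] (θ t) volume :=
      pmix_aesm'_of_measurable (hθ_meas t) (hθ_aesm t)
    have hconst_aesm' : AEStronglyMeasurable[(m t)] (fun _ : Ωs => θstar) volume :=
      ⟨fun _ => θstar, stronglyMeasurable_const, Filter.EventuallyEq.rfl⟩
    have hG_aesm' : AEStronglyMeasurable[(m t)] G volume :=
      Continuous.comp_aestronglyMeasurable (g := gradient F) (f := θ t) hgradc hθ_aesm'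
    have hX_aesm' : AEStronglyMeasurable[(m t)] X volume :=
      (hθ_aesm'.sub hconst_aesm').sub (hG_aesm'.const_smul η)
    -- conditional expectation of the noise vanishes
    have hG_int : Integrable G volume := hG2.integrable one_le_two
    have hce : (volume : Measure Ωs)[e | m t] =ᵐ[volume] 0 := by
      have hsub : (volume : Measure Ωs)[e | m t]
          =ᵐ[volume] (volume : Measure Ωs)[g t | m t] - (volume : Measure Ωs)[G | m t] := by
        have := condExp_sub (μ := (volume : Measure Ωs)) (m := m t) (hg_int t) hG_int
        exact this
      have hGce : (volume : Measure Ωs)[G | m t] =ᵐ[volume] G :=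
        condExp_of_aestronglyMeasurable' hm0le hG_aesm' hG_int
      filter_upwards [hsub, hcond_mean t, hGce] with ω h1 h2 h3
      rw [h1]
      simp only [Pi.sub_apply, Pi.zero_apply]
      rw [h2, h3]
      simp [hG]
    -- cross term vanishes
    have hcross : ∫ ω, ⟪X ω, e ω⟫ ∂(volume : Measure Ωs) = 0 :=
      pmix_integral_inner_eq_zero hm0le hX2 hX_aesm' he2 hce
    -- variance bound
    have hvar : ∫ ω, ‖e ω‖ ^ 2 ∂(volume : Measure Ωs) ≤ σ ^ 2 := by
      have h1 : ∫ ω, ‖e ω‖ ^ 2 ∂(volume : Measure Ωs)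
          = ∫ ω, ((volume : Measure Ωs)[fun ω' => ‖g t ω' - gradient F (θ t ω')‖ ^ 2 | m t]) ω := by
        exact (integral_condExp hm0le).symm
      rw [h1]
      calc ∫ ω, ((volume : Measure Ωs)[fun ω' => ‖g t ω' - gradient F (θ t ω')‖ ^ 2 | m t]) ω
          ≤ ∫ _, σ ^ 2 ∂(volume : Measure Ωs) :=
            integral_mono_ae integrable_condExp (integrable_const _) (hcond_var t)
        _ = σ ^ 2 := by simp
    -- expansion of the squared norm
    have hrw : ∀ ω, θ (t+1) ω - θstar = X ω - η • e ω := by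
      intro ω
      rw [hupd t ω, hX, he, hd, hG, smul_sub]
      module
    have hptws : ∀ ω, ‖θ (t+1) ω - θstar‖ ^ 2
        = ‖X ω‖ ^ 2 - 2 * η * ⟪X ω, e ω⟫ + η ^ 2 * ‖e ω‖ ^ 2 := by
      intro ω
      rw [hrw ω, @norm_sub_sq_real, real_inner_smul_right, norm_smul, Real.norm_eq_abs]
      have : |η| ^ 2 = η ^ 2 := sq_abs η
      rw [mul_pow, this]
      ring
    have hinner_int : Integrable (fun ω => ⟪X ω, e ω⟫) volume := by
      refine Integrable.mono' ((hXsq_int.add (hgsq_int t)).div_const 2)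
        (hX_aesm.inner he_aesm) ?_
      refine Filter.Eventually.of_forall fun ω => ?_
      have h1 := abs_real_inner_le_norm (X ω) (e ω)
      have h2 := norm_nonneg (X ω)
      have h3 := norm_nonneg (e ω)
      rw [Real.norm_eq_abs]
      have h4 : ‖X ω‖ * ‖e ω‖ ≤ (‖X ω‖^2 + ‖e ω‖^2)/2 := by nlinarith [sq_nonneg (‖X ω‖ - ‖e ω‖)]
      calc |⟪X ω, e ω⟫| ≤ ‖X ω‖ * ‖e ω‖ := h1
        _ ≤ (‖X ω‖^2 + ‖e ω‖^2)/2 := h4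
    have hsplit : ∫ ω, ‖θ (t+1) ω - θstar‖ ^ 2
        = (∫ ω, ‖X ω‖ ^ 2) - 2 * η * (∫ ω, ⟪X ω, e ω⟫ ∂(volume : Measure Ωs))
          + η ^ 2 * (∫ ω, ‖e ω‖ ^ 2 ∂(volume : Measure Ωs)) := by
      have h0 : (fun ω => ‖θ (t+1) ω - θstar‖ ^ 2)
          = fun ω => ‖X ω‖ ^ 2 - 2 * η * ⟪X ω, e ω⟫ + η ^ 2 * ‖e ω‖ ^ 2 :=
        funext hptws
      have i1 : Integrable (fun ω => ‖X ω‖ ^ 2 - 2 * η * ⟪X ω, e ω⟫) volume :=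
        hXsq_int.sub (hinner_int.const_mul _)
      have i2 : Integrable (fun ω => η ^ 2 * ‖e ω‖ ^ 2) volume :=
        (hgsq_int t).const_mul _
      have i3 : Integrable (fun ω => 2 * η * ⟪X ω, e ω⟫) volume := hinner_int.const_mul _
      rw [h0, integral_add i1 i2, integral_sub hXsq_int i3,
        integral_const_mul, integral_const_mul]
    -- contraction of the deterministic part
    have hcontr : ∫ ω, ‖X ω‖ ^ 2 ≤ (1 - μ * η) * (∫ ω, ‖θ t ω - θstar‖ ^ 2) := by
      have h1 : ∀ ω, ‖X ω‖ ^ 2 ≤ (1 - μ * η) * ‖θ t ω - θstar‖ ^ 2 := fun ω =>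
        pmix_pointwise_contract F hF L hL hlip μ hμ hsc θstar hmin η hη0 hηL (θ t ω)
      calc ∫ ω, ‖X ω‖ ^ 2 ≤ ∫ ω, (1 - μ * η) * ‖θ t ω - θstar‖ ^ 2 :=
            integral_mono hXsq_int ((hdistsq_int t).const_mul _) h1
        _ = (1 - μ * η) * (∫ ω, ‖θ t ω - θstar‖ ^ 2) := integral_const_mul _ _
    rw [hsplit, hcross]
    have hη2 : (0:ℝ) ≤ η ^ 2 := sq_nonneg η
    have hb : η ^ 2 * (∫ ω, ‖e ω‖ ^ 2 ∂(volume : Measure Ωs)) ≤ η ^ 2 * σ ^ 2 :=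
      mul_le_mul_of_nonneg_left hvar hη2
    calc (∫ ω, ‖X ω‖ ^ 2) - 2 * η * 0 + η ^ 2 * (∫ ω, ‖e ω‖ ^ 2 ∂(volume : Measure Ωs))
        = (∫ ω, ‖X ω‖ ^ 2) + η ^ 2 * (∫ ω, ‖e ω‖ ^ 2 ∂(volume : Measure Ωs)) := by ring
      _ ≤ (1 - μ * η) * (∫ ω, ‖θ t ω - θstar‖ ^ 2) + η ^ 2 * σ ^ 2 := add_le_add hcontr hb
  -- main induction
  intro t
  induction t with
  | zero =>
    have h0 : (fun ω => ‖θ 0 ω - θstar‖ ^ 2) = fun _ => ‖θ0 - θstar‖ ^ 2 := by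
      funext ω; rw [hθ0 ω]
    rw [h0, integral_const]
    simp only [probReal_univ, one_smul]
    have h1 : (0:ℝ) ≤ ‖θ0 - θstar‖ ^ 2 := sq_nonneg _
    have h2 : (0:ℝ) ≤ L * η * σ ^ 2 / μ ^ 2 := by positivity
    have h3 : ‖θ0 - θstar‖ ^ 2 ≤ (L / μ) * ‖θ0 - θstar‖ ^ 2 :=
      le_mul_of_one_le_left h1 hLμ1
    simp only [pow_zero, mul_one]
    linarith
  | succ t ih =>
    by_cases hle : m (t+1) ≤ (inferInstance : MeasurableSpace Ωs)
    · have hm0le : m t ≤ (inferInstance : MeasurableSpace Ωs) := (hmono t).trans hle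
      have hrec := hstep t hm0le
      have hih : (1 - μ * η) * (∫ ω, ‖θ t ω - θstar‖ ^ 2)
          ≤ (1 - μ * η) * ((L / μ) * (1 - μ * η) ^ t * ‖θ0 - θstar‖ ^ 2
            + L * η * σ ^ 2 / μ ^ 2) :=
        mul_le_mul_of_nonneg_left ih h1mη
      have key : (1 - μ * η) * (L * η * σ ^ 2 / μ ^ 2) + η ^ 2 * σ ^ 2
          ≤ L * η * σ ^ 2 / μ ^ 2 := by
        have hid : L * η * σ ^ 2 / μ ^ 2 - (1 - μ * η) * (L * η * σ ^ 2 / μ ^ 2)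
            = (L / μ) * (η ^ 2 * σ ^ 2) := by
          field_simp
          ring
        have hge : η ^ 2 * σ ^ 2 ≤ (L / μ) * (η ^ 2 * σ ^ 2) :=
          le_mul_of_one_le_left (by positivity) hLμ1
        linarith
      have hexp : (1 - μ * η) * ((L / μ) * (1 - μ * η) ^ t * ‖θ0 - θstar‖ ^ 2)
          = (L / μ) * (1 - μ * η) ^ (t+1) * ‖θ0 - θstar‖ ^ 2 := by ring
      calc ∫ ω, ‖θ (t+1) ω - θstar‖ ^ 2
          ≤ (1 - μ * η) * (∫ ω, ‖θ t ω - θstar‖ ^ 2) + η ^ 2 * σ ^ 2 := hrec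
        _ ≤ (1 - μ * η) * ((L / μ) * (1 - μ * η) ^ t * ‖θ0 - θstar‖ ^ 2
            + L * η * σ ^ 2 / μ ^ 2) + η ^ 2 * σ ^ 2 := add_le_add_left hih _
        _ = (L / μ) * (1 - μ * η) ^ (t+1) * ‖θ0 - θstar‖ ^ 2
            + ((1 - μ * η) * (L * η * σ ^ 2 / μ ^ 2) + η ^ 2 * σ ^ 2) := by
            rw [← hexp]; ring
        _ ≤ (L / μ) * (1 - μ * η) ^ (t+1) * ‖θ0 - θstar‖ ^ 2 + L * η * σ ^ 2 / μ ^ 2 := by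
            linarith
    · rw [hdeg (t+1) hle]
      exact hRHS (t+1)
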